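/- Let K be a finite set of finite algebras and A ∈ Q(K). Then A is Q(K)-subdirectly irreducible if and only if the intersection of all non-identity congruences θ on A with A/θ ∈ IS(K) is not the identity congruence Δ_A. -/

import Mathlib

/-- An algebraic signature: a type of operation symbols with arities. -/
structure Signature where
  ops : Type
  arity : ops → ℕ

/-- An algebra for a signature `S`. -/
structure Alg (S : Signature) where
  carrier : Type
  interp : ∀ o : S.ops, (Fin (S.arity o) → carrier) → carrier

/-- Terms over a set `X` of variables. -/
inductive Term (S : Signature) (X : Type) : Type where
  | var : X → Term S X
  | op : (o : S.ops) → (Fin (S.arity o) → Term S X) → Term S X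

variable {S : Signature}

/-- Evaluation of a term in an algebra under an assignment of variables. -/
def Term.eval {X : Type} (A : Alg S) (h : X → A.carrier) : Term S X → A.carrier
  | .var x => h x
  | .op o args => A.interp o (fun i => (args i).eval A h)

/-- Application of a substitution to a term. -/
def Term.subst (σ : ℕ → Term S ℕ) : Term S ℕ → Term S ℕ
  | .var x => σ x
  | .op o args => .op o (fun i => (args i).subst σ)

/-- Homomorphisms of algebras. -/
def IsHom (A B : Alg S) (f : A.carrier → B.carrier) : Prop :=
  ∀ (o : S.ops) (args : Fin (S.arity o) → A.carrier),
    f (A.interp o args) = B.interp o (fun i => f (args i))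

/-- Embeddings of algebras: injective homomorphisms. -/
def IsEmbedding (A B : Alg S) (f : A.carrier → B.carrier) : Prop :=
  IsHom A B f ∧ Function.Injective f

/-- `A` embeds into `B` (i.e. `A` is isomorphic to a subalgebra of `B`). -/
def Embeds (A B : Alg S) : Prop := ∃ f, IsEmbedding A B f

/-- Isomorphism of algebras. -/
def Iso (A B : Alg S) : Prop := ∃ f, IsHom A B f ∧ Function.Bijective f

/-- Product of a family of algebras. -/
def ProdAlg {I : Type} (F : I → Alg S) : Alg S where
  carrier := ∀ i, (F i).carrier
  interp o args i := (F i).interp o (fun j => args j i)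

/-- Binary product of algebras. -/
def Alg.prod (A B : Alg S) : Alg S where
  carrier := A.carrier × B.carrier
  interp o args := (A.interp o (fun i => (args i).1), B.interp o (fun i => (args i).2))

/-- `A` is a subdirect product of the family `F`: there is an embedding of `A`
into the product whose composition with each projection is surjective. -/
def IsSubdirectProduct (A : Alg S) {I : Type} (F : I → Alg S) : Prop :=
  ∃ f : A.carrier → (ProdAlg F).carrier,
    IsEmbedding A (ProdAlg F) f ∧ ∀ i, Function.Surjective (fun a => f a i)

/-- An equation: an ordered pair of terms. -/
abbrev Eqn (S : Signature) (X : Type) := Term S X × Term S X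

/-- An equation holds in an algebra. -/
def Alg.SatisfiesEqn {X : Type} (A : Alg S) (e : Eqn S X) : Prop :=
  ∀ h : X → A.carrier, e.1.eval A h = e.2.eval A h

/-- An equation is valid in a class of algebras. -/
def EqValid (K : Set (Alg S)) (e : Eqn S ℕ) : Prop := ∀ A ∈ K, A.SatisfiesEqn e

/-- A quasiequation: finitely many premises and one conclusion. -/
structure Quasieq (S : Signature) where
  prem : List (Eqn S ℕ)
  concl : Eqn S ℕ

/-- A quasiequation holds in an algebra. -/
def Alg.SatisfiesQ (A : Alg S) (q : Quasieq S) : Prop :=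
  ∀ h : ℕ → A.carrier,
    (∀ e ∈ q.prem, e.1.eval A h = e.2.eval A h) →
      q.concl.1.eval A h = q.concl.2.eval A h

/-- The quasivariety generated by `K`: the class axiomatized by all
quasiequations valid in `K`. -/
def QGen (K : Set (Alg S)) : Set (Alg S) :=
  { A | ∀ q : Quasieq S, (∀ B ∈ K, B.SatisfiesQ q) → A.SatisfiesQ q }

/-- The variety generated by `K`: the class axiomatized by all
equations valid in `K`. -/
def VGen (K : Set (Alg S)) : Set (Alg S) :=
  { A | ∀ e : Eqn S ℕ, (∀ B ∈ K, B.SatisfiesEqn e) → A.SatisfiesEqn e }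

/-- A quasivariety is a class axiomatizable by quasiequations. -/
def IsQuasivariety (Q : Set (Alg S)) : Prop := QGen Q = Q

/-- `A` is `Q`-subdirectly irreducible: `A ∈ Q` and for every `Q`-subdirect
representation of `A`, `A` is isomorphic to one of the components. -/
def QSubdirectlyIrreducible (Q : Set (Alg S)) (A : Alg S) : Prop :=
  A ∈ Q ∧ ∀ (I : Type) (F : I → Alg S), (∀ i, F i ∈ Q) →
    IsSubdirectProduct A F → ∃ i, Iso A (F i)

/-- A congruence on an algebra. -/
structure Cong (A : Alg S) where
  r : A.carrier → A.carrier → Prop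
  iseqv : Equivalence r
  compat : ∀ (o : S.ops) (a b : Fin (S.arity o) → A.carrier),
    (∀ i, r (a i) (b i)) → r (A.interp o a) (A.interp o b)

def Cong.setoid {A : Alg S} (θ : Cong A) : Setoid A.carrier := ⟨θ.r, θ.iseqv⟩

/-- Quotient algebra of `A` by a congruence `θ`. -/
noncomputable def QuotAlg (A : Alg S) (θ : Cong A) : Alg S where
  carrier := Quotient θ.setoid
  interp o args := Quotient.mk θ.setoid (A.interp o (fun i => (args i).out))

/-- The term algebra over variables `X`. -/
def TermAlg (S : Signature) (X : Type) : Alg S where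
  carrier := Term S X
  interp := Term.op

/-- The congruence of all identifications valid in `K` on the term algebra:
the intersection of all congruences whose quotient embeds into a member of `K`. -/
def freeCong (K : Set (Alg S)) (X : Type) : Cong (TermAlg S X) where
  r φ ψ := ∀ A ∈ K, ∀ h : X → A.carrier, φ.eval A h = ψ.eval A h
  iseqv := by
    constructor
    · intro φ A hA h; rfl
    · intro φ ψ H A hA h; exact (H A hA h).symm
    · intro a b c H1 H2 A hA h; exact (H1 A hA h).trans (H2 A hA h)
  compat := by
    intro o a b hab A hA h
    show Term.eval A h (Term.op o a) = Term.eval A h (Term.op o b)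
    simp only [Term.eval]
    congr 1
    funext i
    exact hab i A hA h

/-- The free algebra of `K` over variables `X`. -/
noncomputable def FreeAlg (K : Set (Alg S)) (X : Type) : Alg S :=
  QuotAlg (TermAlg S X) (freeCong K X)

/-- `σ` is a `K`-unifier of the finite set of equations `Γ`. -/
def Unifier (K : Set (Alg S)) (σ : ℕ → Term S ℕ) (Γ : List (Eqn S ℕ)) : Prop :=
  ∀ e ∈ Γ, EqValid K (e.1.subst σ, e.2.subst σ)

/-- `Γ` is `K`-unifiable. -/
def Unifiable (K : Set (Alg S)) (Γ : List (Eqn S ℕ)) : Prop := ∃ σ, Unifier K σ Γ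

/-- The quasiequation `Γ ⇒ e` is `K`-admissible: every `K`-unifier of the
premises unifies the conclusion. -/
def Admissible (K : Set (Alg S)) (Γ : List (Eqn S ℕ)) (e : Eqn S ℕ) : Prop :=
  ∀ σ, Unifier K σ Γ → EqValid K (e.1.subst σ, e.2.subst σ)

/-- The quasiequation `Γ ⇒ e` is valid in the class `K` (`Γ ⊨_K e`). -/
def Models (K : Set (Alg S)) (Γ : List (Eqn S ℕ)) (e : Eqn S ℕ) : Prop :=
  ∀ A ∈ K, ∀ h : ℕ → A.carrier,
    (∀ e' ∈ Γ, e'.1.eval A h = e'.2.eval A h) → e.1.eval A h = e.2.eval A h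

/-- `Γ` is satisfiable in the algebra `A`. -/
def SatIn (A : Alg S) (Γ : List (Eqn S ℕ)) : Prop :=
  ∃ h : ℕ → A.carrier, ∀ e ∈ Γ, e.1.eval A h = e.2.eval A h

section Helpers

variable {S : Signature}

lemma eval_hom {C B : Alg S} {f : C.carrier → B.carrier} (hf : IsHom C B f)
    {X : Type} (h : X → C.carrier) (t : Term S X) :
    t.eval B (f ∘ h) = f (t.eval C h) := by
  induction t with
  | var x => rfl
  | op o args ih =>
    show B.interp o (fun i => (args i).eval B (f ∘ h)) = f (C.interp o (fun i => (args i).eval C h))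
    rw [hf o]
    congr 1
    funext i
    exact ih i

lemma mem_QGen {K : Set (Alg S)} {B : Alg S} (hB : B ∈ K) : B ∈ QGen K :=
  fun q hq => hq _ hB

lemma embeds_QGen {K : Set (Alg S)} {C B : Alg S} (h : Embeds C B) (hB : B ∈ QGen K) :
    C ∈ QGen K := by
  obtain ⟨f, hf, hinj⟩ := h
  intro q hq h0 hp
  have h2 := hB q hq (f ∘ h0) ?_
  · rw [eval_hom hf, eval_hom hf] at h2
    exact hinj h2
  · intro e he
    rw [eval_hom hf, eval_hom hf, hp e he]

lemma isHom_comp {A B C : Alg S} {f : A.carrier → B.carrier} {g : B.carrier → C.carrier}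
    (hf : IsHom A B f) (hg : IsHom B C g) : IsHom A C (g ∘ f) := by
  intro o args
  show g (f (A.interp o args)) = _
  rw [hf o, hg o]
  rfl

lemma mk_isHom (A : Alg S) (θ : Cong A) :
    IsHom A (QuotAlg A θ) (Quotient.mk θ.setoid) := by
  intro o args
  show Quotient.mk θ.setoid (A.interp o args)
      = Quotient.mk θ.setoid (A.interp o fun i => (Quotient.mk θ.setoid (args i)).out)
  refine Quotient.sound (θ.compat o _ _ fun i => ?_)
  exact θ.iseqv.symm (Quotient.exact (Quotient.out_eq (Quotient.mk θ.setoid (args i))))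

/-- The kernel congruence of a homomorphism. -/
def kerCong (A B : Alg S) (g : A.carrier → B.carrier) (hg : IsHom A B g) : Cong A where
  r a b := g a = g b
  iseqv := ⟨fun _ => rfl, Eq.symm, Eq.trans⟩
  compat := by
    intro o a b h
    rw [hg o, hg o]
    congr 1
    funext i
    exact h i

lemma kerCong_embeds {A B : Alg S} (g : A.carrier → B.carrier) (hg : IsHom A B g) :
    Embeds (QuotAlg A (kerCong A B g hg)) B := by
  refine ⟨Quotient.lift g (fun a b h => h), ?_, ?_⟩
  · intro o args
    show g (A.interp o _) = B.interp o _
    rw [hg o]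
    congr 1
    funext i
    conv_rhs => rw [← Quotient.out_eq (args i)]
    rfl
  · intro a b
    refine Quotient.inductionOn₂ a b ?_
    intro a b h
    exact Quotient.sound h

end Helpers
section SEP

variable {S : Signature}

lemma cast_interp {A B : Alg S} (h : A = B) (hc : A.carrier = B.carrier)
    (o : S.ops) (w : Fin (S.arity o) → A.carrier) :
    cast hc (A.interp o w) = B.interp o (fun i => cast hc (w i)) := by
  subst h; rfl

/-- Finite stage: on any finite subset there is a partial homomorphism into a
member of `K` separating `x` and `y`. -/
lemma sep_finite_stage [Finite S.ops] (K : Set (Alg S)) (C : Alg S) (hC : C ∈ QGen K)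
    (x y : C.carrier) (hxy : x ≠ y) (F : Finset C.carrier) :
    ∃ B ∈ K, ∃ g : C.carrier → B.carrier,
      (∀ (o : S.ops) (args : Fin (S.arity o) → C.carrier),
        (∀ i, args i ∈ F) → C.interp o args ∈ F →
          g (C.interp o args) = B.interp o (fun i => g (args i))) ∧ g x ≠ g y := by
  classical
  set F₁ := insert x (insert y F) with hF₁def
  have hxF : x ∈ F₁ := Finset.mem_insert_self _ _
  have hyF : y ∈ F₁ := Finset.mem_insert_of_mem (Finset.mem_insert_self _ _)
  let ε : ↥F₁ ≃ Fin (Fintype.card ↥F₁) := Fintype.equivFin ↥F₁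
  let ι : C.carrier → ℕ := fun c => if hc : c ∈ F₁ then (ε ⟨c, hc⟩ : ℕ) else 0
  let h₀ : ℕ → C.carrier := fun n =>
    if hn : n < Fintype.card ↥F₁ then (ε.symm ⟨n, hn⟩ : C.carrier) else x
  have hret : ∀ c (hc : c ∈ F₁), h₀ (ι c) = c := by
    intro c hc
    simp only [ι, h₀, dif_pos hc]
    rw [dif_pos (ε ⟨c, hc⟩).isLt]
    simp
  -- the quasiequation describing F₁ with conclusion x = y
  let T := Σ o : S.ops, (Fin (S.arity o) → ↥F₁)
  haveI : Fintype T := Fintype.ofFinite T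
  let res : T → C.carrier := fun p => C.interp p.1 (fun i => (p.2 i : C.carrier))
  let lhs : T → Term S ℕ := fun p => Term.op p.1 (fun i => Term.var (ι (p.2 i : C.carrier)))
  let prem : T → Eqn S ℕ := fun p =>
    (lhs p, if res p ∈ F₁ then Term.var (ι (res p)) else lhs p)
  let q : Quasieq S := ⟨(Finset.univ : Finset T).toList.map prem,
    (Term.var (ι x), Term.var (ι y))⟩
  have hCq : ¬ C.SatisfiesQ q := by
    intro hq
    have hconc := hq h₀ ?_
    · have : h₀ (ι x) = h₀ (ι y) := hconc
      rw [hret x hxF, hret y hyF] at this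
      exact hxy this
    · intro e he
      simp only [q, List.mem_map] at he
      obtain ⟨p, -, rfl⟩ := he
      by_cases hres : res p ∈ F₁
      · simp only [prem, if_pos hres]
        show Term.eval C h₀ (lhs p) = Term.eval C h₀ (Term.var (ι (res p)))
        show C.interp p.1 (fun i => Term.eval C h₀ (Term.var (ι (p.2 i : C.carrier)))) = _
        show C.interp p.1 (fun i => h₀ (ι (p.2 i : C.carrier))) = h₀ (ι (res p))
        rw [hret _ hres]
        show _ = res p
        congr 1
        funext i
        exact hret _ (p.2 i).2
      · simp only [prem, if_neg hres]
  have hBq : ∃ B ∈ K, ¬ B.SatisfiesQ q := by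
    by_contra h
    push_neg at h
    exact hCq (hC q h)
  obtain ⟨B, hBK, hB⟩ := hBq
  rw [Alg.SatisfiesQ] at hB
  push_neg at hB
  obtain ⟨h, hprem, hconcl⟩ := hB
  refine ⟨B, hBK, fun c => h (ι c), ?_, ?_⟩
  · intro o args hargs hres
    have hargs1 : ∀ i, args i ∈ F₁ :=
      fun i => Finset.mem_insert_of_mem (Finset.mem_insert_of_mem (hargs i))
    have hres1 : C.interp o args ∈ F₁ :=
      Finset.mem_insert_of_mem (Finset.mem_insert_of_mem hres)
    set p : T := ⟨o, fun i => ⟨args i, hargs1 i⟩⟩ with hpdef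
    have hresp : res p = C.interp o args := rfl
    have hpmem : prem p ∈ q.prem :=
      List.mem_map_of_mem (f := prem) (Finset.mem_toList.mpr (Finset.mem_univ p))
    have heq := hprem (prem p) hpmem
    simp only [prem, hresp, if_pos hres1] at heq
    have heq2 : B.interp o (fun i => h (ι (args i))) = h (ι (C.interp o args)) := heq
    exact heq2.symm
  · exact fun hcon => hconcl hcon

/-- Separation: every pair of distinct elements of an algebra in `QGen K` is
separated by a homomorphism into a member of `K`. -/
lemma sep [Finite S.ops] (K : Set (Alg S)) (hKfin : K.Finite)
    (hfin : ∀ A ∈ K, Finite A.carrier) (C : Alg S) (hC : C ∈ QGen K)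
    (x y : C.carrier) (hxy : x ≠ y) :
    ∃ B ∈ K, ∃ g : C.carrier → B.carrier, IsHom C B g ∧ g x ≠ g y := by
  classical
  have claim := sep_finite_stage K C hC x y hxy
  choose Bf hBfK g hg1 hg2 using claim
  haveI : Nonempty (Finset C.carrier) := ⟨∅⟩
  let U : Ultrafilter (Finset C.carrier) := Ultrafilter.of Filter.atTop
  have hUat : ∀ F₀ : Finset C.carrier, {F | F₀ ≤ F} ∈ U :=
    fun F₀ => (Ultrafilter.of_le Filter.atTop) (Filter.mem_atTop F₀)
  haveI : Finite ↥K := hKfin.to_subtype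
  let b : Finset C.carrier → ↥K := fun F => ⟨Bf F, hBfK F⟩
  obtain ⟨Bstar, -, hpure⟩ :=
    Ultrafilter.eq_pure_of_finite_mem (f := U.map b) (s := (Set.univ : Set ↥K))
      Set.finite_univ Filter.univ_mem
  have hSB : {F | b F = Bstar} ∈ U := by
    have h1 : ({Bstar} : Set ↥K) ∈ U.map b := by
      rw [hpure]; exact rfl
    exact h1
  have carrEq : ∀ {F}, b F = Bstar → (Bf F).carrier = (Bstar : Alg S).carrier :=
    fun h => congrArg Alg.carrier (congrArg Subtype.val h)
  have algEq : ∀ {F}, b F = Bstar → (Bf F) = (Bstar : Alg S) :=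
    fun h => congrArg Subtype.val h
  obtain ⟨F₀, hF₀⟩ := U.nonempty_of_mem hSB
  let dflt : (Bstar : Alg S).carrier := cast (carrEq hF₀) (g F₀ x)
  let v : C.carrier → Finset C.carrier → (Bstar : Alg S).carrier :=
    fun c F => if h : b F = Bstar then cast (carrEq h) (g F c) else dflt
  haveI : Finite (Bstar : Alg S).carrier := hfin _ Bstar.2
  have hφex : ∀ c : C.carrier, ∃ a, {F | v c F = a} ∈ U := by
    intro c
    obtain ⟨a, -, ha⟩ :=
      Ultrafilter.eq_pure_of_finite_mem (f := U.map (v c))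
        (s := (Set.univ : Set (Bstar : Alg S).carrier)) Set.finite_univ Filter.univ_mem
    refine ⟨a, ?_⟩
    have h1 : ({a} : Set (Bstar : Alg S).carrier) ∈ U.map (v c) := by
      rw [ha]; exact rfl
    exact h1
  choose φ hφ using hφex
  have hv : ∀ (c : C.carrier) (F) (h : b F = Bstar), v c F = cast (carrEq h) (g F c) :=
    fun c F h => dif_pos h
  refine ⟨(Bstar : Alg S), Bstar.2, φ, ?_, ?_⟩
  · intro o args
    have hmem : ({F | b F = Bstar} ∩
        {F | insert (C.interp o args) (Finset.image args Finset.univ) ≤ F} ∩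
        (⋂ i, {F | v (args i) F = φ (args i)}) ∩
        {F | v (C.interp o args) F = φ (C.interp o args)}) ∈ U := by
      refine Filter.inter_mem (Filter.inter_mem (Filter.inter_mem hSB (hUat _)) ?_) (hφ _)
      exact Filter.iInter_mem.mpr fun i => hφ (args i)
    obtain ⟨F, ⟨⟨⟨hbF, hle⟩, hvargs⟩, hvres⟩⟩ := U.nonempty_of_mem hmem
    have hvargs' : ∀ i, v (args i) F = φ (args i) := by
      intro i
      exact Set.mem_iInter.mp hvargs i
    have hargsF : ∀ i, args i ∈ F :=
      fun i => hle (Finset.mem_insert_of_mem (Finset.mem_image_of_mem args (Finset.mem_univ i)))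
    have hresF : C.interp o args ∈ F := hle (Finset.mem_insert_self _ _)
    have key := hg1 F o args hargsF hresF
    have key2 : cast (carrEq hbF) (g F (C.interp o args))
        = (Bstar : Alg S).interp o (fun i => cast (carrEq hbF) (g F (args i))) := by
      rw [key]
      exact cast_interp (algEq hbF) (carrEq hbF) o _
    have e1 : cast (carrEq hbF) (g F (C.interp o args)) = φ (C.interp o args) :=
      (hv _ F hbF).symm.trans hvres
    have e2 : ∀ i, cast (carrEq hbF) (g F (args i)) = φ (args i) :=
      fun i => (hv _ F hbF).symm.trans (hvargs' i)
    rw [e1] at key2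
    rw [key2]
    congr 1
    funext i
    exact e2 i
  · intro hcon
    have hmem : ({F | b F = Bstar} ∩ {F | v x F = φ x} ∩ {F | v y F = φ y}) ∈ U :=
      Filter.inter_mem (Filter.inter_mem hSB (hφ x)) (hφ y)
    obtain ⟨F, ⟨⟨hbF, hvx⟩, hvy⟩⟩ := U.nonempty_of_mem hmem
    have e1 : cast (carrEq hbF) (g F x) = φ x := (hv _ F hbF).symm.trans hvx
    have e2 : cast (carrEq hbF) (g F y) = φ y := (hv _ F hbF).symm.trans hvy
    have hcast : cast (carrEq hbF) (g F x) = cast (carrEq hbF) (g F y) := by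
      rw [e1, e2, hcon]
    exact hg2 F ((Equiv.cast (carrEq hbF)).injective hcast)

end SEP
section Main

variable {S : Signature}

/-- The image of a homomorphism, as a subalgebra of the codomain. -/
noncomputable def ImAlg (A B : Alg S) (h : A.carrier → B.carrier) (hh : IsHom A B h) : Alg S where
  carrier := {b : B.carrier // ∃ a, h a = b}
  interp o args := ⟨B.interp o (fun i => (args i).1), by
    choose a ha using fun i => (args i).2
    refine ⟨A.interp o a, ?_⟩
    rw [hh o]
    congr 1
    funext i
    exact ha i⟩

lemma imAlg_embeds {A B : Alg S} (h : A.carrier → B.carrier) (hh : IsHom A B h) :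
    Embeds (ImAlg A B h hh) B :=
  ⟨Subtype.val, fun o args => rfl, Subtype.val_injective⟩

lemma imAlg_toIm_isHom {A B : Alg S} (h : A.carrier → B.carrier) (hh : IsHom A B h) :
    IsHom A (ImAlg A B h hh) (fun a => ⟨h a, a, rfl⟩) := by
  intro o args
  apply Subtype.ext
  exact hh o args

end Main
/-- For a finite set `K` of finite algebras and `A ∈ Q(K)`:
`A` is `Q(K)`-subdirectly irreducible iff the intersection of all
non-identity congruences `θ` on `A` with `A/θ ∈ IS(K)` is not the identity. -/
theorem stmt8 {S : Signature} [Finite S.ops] (K : Set (Alg S)) (hKfin : K.Finite)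
    (hfin : ∀ A ∈ K, Finite A.carrier) (A : Alg S) (hA : A ∈ QGen K) :
    QSubdirectlyIrreducible (QGen K) A ↔
      ∃ a b : A.carrier, a ≠ b ∧
        ∀ θ : Cong A, (∃ c d : A.carrier, θ.r c d ∧ c ≠ d) →
          (∃ B ∈ K, Embeds (QuotAlg A θ) B) → θ.r a b := by
  classical
  constructor
  · -- forward direction
    intro hSI
    by_contra hN
    push_neg at hN
    by_cases htriv : ∀ a b : A.carrier, a = b
    · -- A trivial: not SI via the empty subdirect product
      obtain ⟨i, -⟩ := hSI.2 Empty (fun i => i.elim) (fun i => i.elim)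
        ⟨fun _ i => i.elim,
         ⟨fun o args => funext fun i => i.elim, fun a b _ => htriv a b⟩,
         fun i => i.elim⟩
      exact i.elim
    · push_neg at htriv
      obtain ⟨a₀, b₀, hab₀⟩ := htriv
      let I := {θ : Cong A // (∃ c d, θ.r c d ∧ c ≠ d) ∧ ∃ B ∈ K, Embeds (QuotAlg A θ) B}
      have hch : ∀ θ : I, ∃ B, B ∈ K ∧ ∃ e, IsEmbedding (QuotAlg A θ.1) B e := by
        intro θ
        obtain ⟨B, hB, e, he⟩ := θ.2.2
        exact ⟨B, hB, e, he⟩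
      choose Bc hBcK ec hec using hch
      let hmap : ∀ θ : I, A.carrier → (Bc θ).carrier :=
        fun θ => ec θ ∘ Quotient.mk θ.1.setoid
      have hmaphom : ∀ θ : I, IsHom A (Bc θ) (hmap θ) :=
        fun θ => isHom_comp (mk_isHom A θ.1) (hec θ).1
      let Fc : I → Alg S := fun θ => ImAlg A (Bc θ) (hmap θ) (hmaphom θ)
      let f : A.carrier → (ProdAlg Fc).carrier := fun a θ => ⟨hmap θ a, a, rfl⟩
      have hFQ : ∀ θ : I, Fc θ ∈ QGen K :=
        fun θ => embeds_QGen (imAlg_embeds _ _) (mem_QGen (hBcK θ))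
      have hsub : IsSubdirectProduct A Fc := by
        refine ⟨f, ⟨?_, ?_⟩, ?_⟩
        · intro o args
          funext θ
          exact imAlg_toIm_isHom (hmap θ) (hmaphom θ) o args
        · intro u w huw
          by_contra hne
          obtain ⟨θ₀, hP, hQ, hR⟩ := hN u w hne
          have h1 : hmap ⟨θ₀, hP, hQ⟩ u = hmap ⟨θ₀, hP, hQ⟩ w :=
            congrArg Subtype.val (congrFun huw ⟨θ₀, hP, hQ⟩)
          have h2 : Quotient.mk θ₀.setoid u = Quotient.mk θ₀.setoid w :=
            (hec ⟨θ₀, hP, hQ⟩).2 h1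
          exact hR (Quotient.exact h2)
        · intro θ
          rintro ⟨val, u, rfl⟩
          exact ⟨u, rfl⟩
      obtain ⟨θ, gb, hgbhom, hgbbij⟩ := hSI.2 I Fc hFQ hsub
      haveI : Finite (Bc θ).carrier := hfin _ (hBcK θ)
      haveI : Finite (Fc θ).carrier := by
        show Finite {b : (Bc θ).carrier // ∃ a, hmap θ a = b}
        infer_instance
      haveI : Finite A.carrier := Finite.of_injective gb hgbbij.injective
      let f' : A.carrier → (Fc θ).carrier := fun u => ⟨hmap θ u, u, rfl⟩
      have hf'surj : Function.Surjective f' := by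
        rintro ⟨val, u, rfl⟩
        exact ⟨u, rfl⟩
      have hf'inj : Function.Injective f' := by
        have E := Equiv.ofBijective gb hgbbij
        exact (Finite.injective_iff_surjective_of_equiv E).mpr hf'surj
      obtain ⟨c, d, hcd, hcdne⟩ := θ.2.1
      apply hcdne
      apply hf'inj
      apply Subtype.ext
      show hmap θ c = hmap θ d
      show ec θ (Quotient.mk θ.1.setoid c) = ec θ (Quotient.mk θ.1.setoid d)
      rw [Quotient.sound hcd]
  · -- backward direction
    rintro ⟨a, b, hab, hmono⟩
    refine ⟨hA, ?_⟩
    rintro I F hFQ ⟨f, ⟨hfhom, hfinj⟩, hfsurj⟩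
    by_cases hex : ∃ i, Function.Injective (fun u => f u i)
    · obtain ⟨i, hi⟩ := hex
      refine ⟨i, fun u => f u i, ?_, hi, hfsurj i⟩
      intro o args
      exact congrFun (hfhom o args) i
    · push_neg at hex
      exfalso
      apply hab
      apply hfinj
      funext i
      by_contra hfab
      have hpi : IsHom A (F i) (fun u => f u i) := fun o args => congrFun (hfhom o args) i
      let θi := kerCong A (F i) _ hpi
      have hCQ : QuotAlg A θi ∈ QGen K :=
        embeds_QGen (kerCong_embeds _ hpi) (hFQ i)
      have hmkne : Quotient.mk θi.setoid a ≠ Quotient.mk θi.setoid b := by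
        intro h
        exact hfab (Quotient.exact h)
      obtain ⟨B, hBK, gC, hgChom, hgCne⟩ :=
        sep K hKfin hfin (QuotAlg A θi) hCQ _ _ hmkne
      have hg0hom : IsHom A B (gC ∘ Quotient.mk θi.setoid) :=
        isHom_comp (mk_isHom A θi) hgChom
      have hnei := hex i
      rw [Function.not_injective_iff] at hnei
      obtain ⟨c, d, hcd, hcdne⟩ := hnei
      have hrab := hmono (kerCong A B _ hg0hom)
        ⟨c, d, by
          show gC (Quotient.mk θi.setoid c) = gC (Quotient.mk θi.setoid d)
          rw [Quotient.sound (show θi.r c d from hcd)], hcdne⟩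
        ⟨B, hBK, kerCong_embeds _ hg0hom⟩
      exact hgCne hrab
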